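/- Let p < 0. For any measure space (X, 𝒜, μ) and any measurable f, g : X → (0,∞] (with the convention f^p = 0 where f = ∞) such that ∫ f^p dμ < ∞ and ∫ g^p dμ < ∞, setting C := min{∫ f^p dμ, ∫ g^p dμ, ∫ (fg)^{p/2} dμ} / ∫ (fg)^{p/2} dμ if ∫ (fg)^{p/2} dμ > 0 and C := 1 otherwise, one has ∫ (f+g)^p dμ ≤ (C^{−1/p} + C^{1/p})^p · ∫ (fg)^{p/2} dμ. -/

import Mathlib

open MeasureTheory Real Set
open scoped ENNReal


-- two-point convexity of x^p for p<0
lemma conv_rpow_neg {p l u : ℝ} (hp : p < 0) (hl0 : 0 ≤ l) (hl1 : l ≤ 1) (hu : 0 < u) :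
    (l * u + (1 - l)) ^ p ≤ l * u ^ p + (1 - l) := by
  have hbase : 0 < l * u + (1 - l) := by
    rcases lt_or_eq_of_le hl1 with h | h
    · nlinarith [mul_nonneg hl0 hu.le]
    · rw [h]; simpa using hu
  have hlog : l * Real.log u ≤ Real.log (l * u + (1 - l)) := by
    have := (strictConcaveOn_log_Ioi.concaveOn).2 (Set.mem_Ioi.2 hu) (Set.mem_Ioi.2 one_pos)
      hl0 (by linarith : (0:ℝ) ≤ 1 - l) (by ring)
    simpa [smul_eq_mul] using this
  have h1 : p * Real.log (l * u + (1 - l)) ≤ l * (p * Real.log u) := by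
    nlinarith [mul_le_mul_of_nonpos_left hlog hp.le]
  have h2 : (l * u + (1 - l)) ^ p ≤ Real.exp (l * (p * Real.log u)) := by
    rw [Real.rpow_def_of_pos hbase]
    exact Real.exp_le_exp.2 (by nlinarith [h1])
  have h3 : Real.exp (l * (p * Real.log u)) ≤ l * Real.exp (p * Real.log u) + (1 - l) := by
    have := convexOn_exp.2 (Set.mem_univ (p * Real.log u)) (Set.mem_univ (0:ℝ))
      hl0 (by linarith : (0:ℝ) ≤ 1 - l) (by ring)
    simpa [smul_eq_mul] using this
  calc (l * u + (1 - l)) ^ p ≤ Real.exp (l * (p * Real.log u)) := h2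
    _ ≤ l * Real.exp (p * Real.log u) + (1 - l) := h3
    _ = l * u ^ p + (1 - l) := by rw [Real.rpow_def_of_pos hu, mul_comm (Real.log u) p]

lemma real_pointwise {p a F G : ℝ} (hp : p < 0) (ha : 1 ≤ a) (hF : 0 < F) (hG : 0 < G) :
    (F + G) ^ p ≤ (a + 1/a) ^ p * ((a - 1/a) / (a + 1/a)) * a ^ (-p) * F ^ p
      + (a + 1/a) ^ p * ((2/a) / (a + 1/a)) * (F * G) ^ (p/2) := by
  have ha0 : (0:ℝ) < a := lt_of_lt_of_le one_pos ha
  set s : ℝ := a + 1/a with hs_def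
  have hs : 0 < s := by positivity
  set l : ℝ := (a - 1/a) / s with hl_def
  have h1a : 1/a ≤ a := le_trans (by rw [div_le_one ha0]; exact ha) ha
  have hl0 : 0 ≤ l := div_nonneg (by linarith) hs.le
  have hl1 : l ≤ 1 := by
    rw [hl_def, div_le_one hs]
    have : 0 < 1/a := by positivity
    rw [hs_def]; linarith
  set u : ℝ := (F/G) ^ ((1:ℝ)/2) / a with hu_def
  have hu : 0 < u := div_pos (Real.rpow_pos_of_pos (div_pos hF hG) _) ha0
  set R : ℝ := (F*G) ^ ((1:ℝ)/2) with hR_def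
  have hR : 0 < R := Real.rpow_pos_of_pos (mul_pos hF hG) _
  have hkey : (F/G) ^ ((1:ℝ)/2) * R = F := by
    rw [hR_def, ← Real.mul_rpow (by positivity) (by positivity)]
    have h2 : F/G*(F*G) = F^2 := by field_simp
    rw [h2, ← Real.rpow_natCast F 2, ← Real.rpow_mul hF.le]
    norm_num
  have huR : u * R = F / a := by rw [hu_def, div_mul_eq_mul_div, hkey]
  have hR2 : R^2 = F*G := by
    rw [hR_def, ← Real.rpow_natCast _ 2, ← Real.rpow_mul (by positivity)]
    norm_num
  have hAM : (l*u + (1-l)) * (s*R) ≤ F + G := by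
    have hls : l * s = a - 1/a := by rw [hl_def]; field_simp
    have h1ls : (1-l) * s = 2/a := by
      rw [hl_def, hs_def]; field_simp; ring
    have expand : (l*u + (1-l)) * (s*R) = (a - 1/a)*(u*R) + (2/a)*R := by
      calc (l*u + (1-l))*(s*R) = (l*s)*(u*R) + ((1-l)*s)*R := by ring
        _ = (a-1/a)*(u*R) + (2/a)*R := by rw [hls, h1ls]
    rw [expand, huR]
    have h2aR : 2*a*R ≤ F + a^2*G := by
      nlinarith [sq_nonneg (F - a^2*G), hR2, mul_pos ha0 hR, hF.le, hG.le,
        mul_pos (mul_pos ha0 ha0) hG]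
    have expand2 : (a - 1/a)*(F/a) + 2/a*R = ((a^2-1)*F + 2*a*R)/a^2 := by
      field_simp
    rw [expand2, div_le_iff₀ (by positivity)]
    nlinarith [h2aR]
  have hcomb : 0 < l*u + (1-l) := by
    rcases lt_or_eq_of_le hl1 with h | h
    · nlinarith [mul_nonneg hl0 hu.le]
    · rw [h]; simpa using hu
  have hq : l*u + (1-l) ≤ (F+G)/(s*R) := (le_div_iff₀ (by positivity)).2 hAM
  have h2 : ((F+G)/(s*R)) ^ p ≤ (l*u+(1-l)) ^ p :=
    Real.rpow_le_rpow_of_nonpos hcomb hq hp.le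
  have h3 := conv_rpow_neg hp hl0 hl1 hu
  have hdiv : ((F+G)/(s*R))^p = (F+G)^p / (s^p * R^p) := by
    rw [Real.div_rpow (by positivity) (by positivity), Real.mul_rpow hs.le hR.le]
  have hmain : (F+G)^p ≤ (l * u^p + (1-l)) * (s^p * R^p) := by
    have h4 := h2.trans h3
    rw [hdiv] at h4
    exact (div_le_iff₀ (by positivity)).1 h4
  have hup : u^p * R^p = a^(-p) * F^p := by
    rw [← Real.mul_rpow hu.le hR.le, huR, Real.div_rpow hF.le ha0.le,
      Real.rpow_neg ha0.le]
    ring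
  have hRp : R^p = (F*G)^(p/2) := by
    rw [hR_def, ← Real.rpow_mul (by positivity)]
    congr 1; ring
  have h1l : 1 - l = (2/a)/s := by
    rw [hl_def, hs_def]; field_simp; ring
  calc (F+G)^p ≤ (l * u^p + (1-l)) * (s^p * R^p) := hmain
    _ = s^p * l * (u^p * R^p) + s^p * (1-l) * R^p := by ring
    _ = s^p * l * a^(-p) * F^p + s^p * ((2/a)/s) * (F*G)^(p/2) := by
        rw [hup, hRp, h1l]; ring
    _ = s ^ p * ((a - 1/a) / s) * a ^ (-p) * F ^ p
        + s ^ p * ((2/a) / s) * (F * G) ^ (p/2) := by rw [hl_def]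

lemma enn_pointwise {p a : ℝ} (hp : p < 0) (ha : 1 ≤ a) {x y : ℝ≥0∞} (hx : 0 < x) (hy : 0 < y) :
    (x + y) ^ p ≤ ENNReal.ofReal ((a + 1/a) ^ p * ((a - 1/a) / (a + 1/a)) * a ^ (-p)) * x ^ p
      + ENNReal.ofReal ((a + 1/a) ^ p * ((2/a) / (a + 1/a))) * (x*y) ^ (p/2) := by
  have ha0 : (0:ℝ) < a := lt_of_lt_of_le one_pos ha
  rcases eq_top_or_lt_top x with hxt | hxt
  · rw [hxt, top_add, ENNReal.top_rpow_of_neg hp]; exact zero_le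
  rcases eq_top_or_lt_top y with hyt | hyt
  · rw [hyt, add_top, ENNReal.top_rpow_of_neg hp]; exact zero_le
  have hF : 0 < x.toReal := ENNReal.toReal_pos hx.ne' hxt.ne
  have hG : 0 < y.toReal := ENNReal.toReal_pos hy.ne' hyt.ne
  have hxF : x = ENNReal.ofReal x.toReal := (ENNReal.ofReal_toReal hxt.ne).symm
  have hyG : y = ENNReal.ofReal y.toReal := (ENNReal.ofReal_toReal hyt.ne).symm
  have hc1 : 0 ≤ (a + 1/a) ^ p * ((a - 1/a) / (a + 1/a)) * a ^ (-p) := by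
    have h1a : 1/a ≤ a := le_trans (by rw [div_le_one ha0]; exact ha) ha
    have : 0 ≤ (a - 1/a) / (a + 1/a) := div_nonneg (by linarith) (by positivity)
    positivity
  have hc2 : 0 ≤ (a + 1/a) ^ p * ((2/a) / (a + 1/a)) := by positivity
  rw [hxF, hyG, ← ENNReal.ofReal_add hF.le hG.le, ← ENNReal.ofReal_mul hF.le,
    ENNReal.ofReal_rpow_of_pos (by positivity), ENNReal.ofReal_rpow_of_pos hF,
    ENNReal.ofReal_rpow_of_pos (by positivity),
    ← ENNReal.ofReal_mul hc1, ← ENNReal.ofReal_mul hc2,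
    ← ENNReal.ofReal_add (by positivity) (by positivity)]
  exact ENNReal.ofReal_le_ofReal (real_pointwise hp ha hF hG)

lemma integrated {X : Type*} [MeasurableSpace X] (μ : Measure X) {p a : ℝ}
    (hp : p < 0) (ha : 1 ≤ a) (f g : X → ℝ≥0∞) (hf : Measurable f) (hg : Measurable g)
    (hfpos : ∀ x, 0 < f x) (hgpos : ∀ x, 0 < g x) :
    ∫⁻ x, (f x + g x) ^ p ∂μ ≤
      ENNReal.ofReal ((a + 1/a) ^ p * ((a - 1/a) / (a + 1/a)) * a ^ (-p)) * ∫⁻ x, f x ^ p ∂μ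
      + ENNReal.ofReal ((a + 1/a) ^ p * ((2/a) / (a + 1/a))) * ∫⁻ x, (f x * g x) ^ (p/2) ∂μ := by
  calc ∫⁻ x, (f x + g x) ^ p ∂μ
      ≤ ∫⁻ x, (ENNReal.ofReal ((a + 1/a) ^ p * ((a - 1/a) / (a + 1/a)) * a ^ (-p)) * f x ^ p
        + ENNReal.ofReal ((a + 1/a) ^ p * ((2/a) / (a + 1/a))) * (f x * g x) ^ (p/2)) ∂μ :=
        lintegral_mono fun x => enn_pointwise hp ha (hfpos x) (hgpos x)
    _ = _ := by
        rw [lintegral_add_left ((hf.pow_const p).const_mul _),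
          lintegral_const_mul _ (hf.pow_const p),
          lintegral_const_mul _ (show Measurable fun x => (f x * g x) ^ (p/2) from (hf.mul hg).pow_const (p/2))]

lemma M_ne_top {X : Type*} [MeasurableSpace X] (μ : Measure X) {p : ℝ}
    (hp : p < 0) (f g : X → ℝ≥0∞) (hf : Measurable f) (hg : Measurable g)
    (hfpos : ∀ x, 0 < f x) (hgpos : ∀ x, 0 < g x)
    (hfp : ∫⁻ x, f x ^ p ∂μ ≠ ∞) (hgp : ∫⁻ x, g x ^ p ∂μ ≠ ∞) :
    ∫⁻ x, (f x * g x) ^ (p/2) ∂μ ≠ ∞ := by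
  have hconj : Real.HolderConjugate 2 2 := (Real.holderConjugate_iff_eq_conjExponent one_lt_two).2 (by norm_num)
  have hCS := ENNReal.lintegral_mul_le_Lp_mul_Lq μ hconj
    (hf.pow_const (p/2)).aemeasurable (hg.pow_const (p/2)).aemeasurable
  have heq : ∫⁻ x, (f x * g x) ^ (p/2) ∂μ
      = ∫⁻ x, ((fun x => f x ^ (p/2)) * fun x => g x ^ (p/2)) x ∂μ := by
    refine lintegral_congr fun x => ?_
    simp only [Pi.mul_apply]
    exact ENNReal.mul_rpow_of_ne_zero (hfpos x).ne' (hgpos x).ne' _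
  have hpow : ∀ (h : X → ℝ≥0∞), (∫⁻ x, (h x ^ (p/2)) ^ (2:ℝ) ∂μ) = ∫⁻ x, h x ^ p ∂μ := by
    intro h
    refine lintegral_congr fun x => ?_
    rw [← ENNReal.rpow_mul]
    norm_num
  rw [heq]
  refine ne_top_of_le_ne_top ?_ hCS
  rw [hpow f, hpow g]
  exact ENNReal.mul_ne_top (ENNReal.rpow_ne_top_of_nonneg (by norm_num) hfp)
    (ENNReal.rpow_ne_top_of_nonneg (by norm_num) hgp)

lemma A_ne_zero {X : Type*} [MeasurableSpace X] (μ : Measure X) {p : ℝ}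
    (hp : p < 0) (f g : X → ℝ≥0∞) (hf : Measurable f) (hg : Measurable g)
    (hfpos : ∀ x, 0 < f x) (hgpos : ∀ x, 0 < g x)
    (hM0 : ∫⁻ x, (f x * g x) ^ (p/2) ∂μ ≠ 0) :
    ∫⁻ x, f x ^ p ∂μ ≠ 0 := by
  intro h
  have h1 := (lintegral_eq_zero_iff (hf.pow_const p)).1 h
  apply hM0
  rw [lintegral_eq_zero_iff (show Measurable fun x => (f x * g x) ^ (p/2) from (hf.mul hg).pow_const (p/2))]
  filter_upwards [h1] with x hx
  have hfx : f x = ⊤ := by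
    rcases ENNReal.rpow_eq_zero_iff.1 hx with ⟨h0, _⟩ | ⟨ht, _⟩
    · exact absurd h0 (hfpos x).ne'
    · exact ht
  simp only [Pi.zero_apply]
  rw [hfx, ENNReal.top_mul (hgpos x).ne', ENNReal.top_rpow_of_neg (by linarith)]

lemma key {X : Type*} [MeasurableSpace X] (μ : Measure X) {p : ℝ}
    (hp : p < 0) (f g : X → ℝ≥0∞) (hf : Measurable f) (hg : Measurable g)
    (hfpos : ∀ x, 0 < f x) (hgpos : ∀ x, 0 < g x)
    (hfp : ∫⁻ x, f x ^ p ∂μ ≠ ∞) (hgp : ∫⁻ x, g x ^ p ∂μ ≠ ∞)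
    (hM0 : ∫⁻ x, (f x * g x) ^ (p/2) ∂μ ≠ 0)
    (C : ℝ)
    (hC : C = min (∫⁻ x, f x ^ p ∂μ).toReal (∫⁻ x, (f x * g x) ^ (p/2) ∂μ).toReal /
      (∫⁻ x, (f x * g x) ^ (p/2) ∂μ).toReal) :
    ∫⁻ x, (f x + g x) ^ p ∂μ ≤
      ENNReal.ofReal ((C ^ (-(1 / p)) + C ^ (1 / p)) ^ p) *
        ∫⁻ x, (f x * g x) ^ (p / 2) ∂μ := by
  have hp0 : p ≠ 0 := ne_of_lt hp
  have hMt : ∫⁻ x, (f x * g x) ^ (p/2) ∂μ ≠ ∞ := M_ne_top μ hp f g hf hg hfpos hgpos hfp hgp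
  have hA0 : ∫⁻ x, f x ^ p ∂μ ≠ 0 := A_ne_zero μ hp f g hf hg hfpos hgpos hM0
  set a' : ℝ := (∫⁻ x, f x ^ p ∂μ).toReal with ha'_def
  set m' : ℝ := (∫⁻ x, (f x * g x) ^ (p/2) ∂μ).toReal with hm'_def
  have ha'pos : 0 < a' := ENNReal.toReal_pos hA0 hfp
  have hm'pos : 0 < m' := ENNReal.toReal_pos hM0 hMt
  have hC1 : 0 < C := by rw [hC]; exact div_pos (lt_min ha'pos hm'pos) hm'pos
  have hC2 : C ≤ 1 := by rw [hC]; exact div_le_one_of_le₀ (min_le_right _ _) hm'pos.le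
  set a : ℝ := C ^ (1/p) with ha_def
  have h1p : (1:ℝ)/p ≤ 0 := le_of_lt (div_neg_of_pos_of_neg one_pos hp)
  have ha : 1 ≤ a := Real.one_le_rpow_of_pos_of_le_one_of_nonpos hC1 hC2 h1p
  have ha0 : (0:ℝ) < a := lt_of_lt_of_le one_pos ha
  have hap : a ^ p = C := by
    rw [ha_def, ← Real.rpow_mul hC1.le, one_div, inv_mul_cancel₀ hp0, Real.rpow_one]
  have hanegp : a ^ (-p) = C⁻¹ := by
    rw [Real.rpow_neg ha0.le, hap]
  have htc : C ^ (-(1/p)) + C ^ (1/p) = a + 1/a := by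
    rw [Real.rpow_neg hC1.le, ← ha_def, one_div a, add_comm]
  have hint := integrated μ hp ha f g hf hg hfpos hgpos
  have hs : (0:ℝ) < a + 1/a := by positivity
  have h1a : 1/a ≤ a := le_trans (by rw [div_le_one ha0]; exact ha) ha
  have hl0 : 0 ≤ (a - 1/a) / (a + 1/a) := div_nonneg (by linarith) hs.le
  have hc1 : 0 ≤ (a + 1/a) ^ p * ((a - 1/a) / (a + 1/a)) * a ^ (-p) := by positivity
  have hc2 : 0 ≤ (a + 1/a) ^ p * ((2/a) / (a + 1/a)) := by positivity
  -- the scalar arithmetic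
  have harith : ((a + 1/a) ^ p * ((a - 1/a) / (a + 1/a)) * a ^ (-p)) * a'
      + ((a + 1/a) ^ p * ((2/a) / (a + 1/a))) * m' = (a + 1/a) ^ p * m' := by
    rcases le_total a' m' with hcase | hcase
    · have hC_eq : C = a' / m' := by rw [hC, min_eq_left hcase]
      have h1 : a ^ (-p) * a' = m' := by
        rw [hanegp, hC_eq, inv_div]
        field_simp
      calc ((a + 1/a) ^ p * ((a - 1/a) / (a + 1/a)) * a ^ (-p)) * a'
            + ((a + 1/a) ^ p * ((2/a) / (a + 1/a))) * m'
          = (a + 1/a) ^ p * ((a - 1/a) / (a + 1/a)) * (a ^ (-p) * a')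
            + ((a + 1/a) ^ p * ((2/a) / (a + 1/a))) * m' := by ring
        _ = (a + 1/a) ^ p * (((a - 1/a) / (a + 1/a)) + ((2/a) / (a + 1/a))) * m' := by
            rw [h1]; ring
        _ = (a + 1/a) ^ p * m' := by
            rw [← add_div]
            have : a - 1/a + 2/a = a + 1/a := by ring
            rw [this, div_self (ne_of_gt hs), mul_one]
    · have hC_eq : C = 1 := by rw [hC, min_eq_right hcase, div_self (ne_of_gt hm'pos)]
      have ha1 : a = 1 := by rw [ha_def, hC_eq, Real.one_rpow]
      rw [ha1]; norm_num
  -- assemble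
  have hA : (∫⁻ x, f x ^ p ∂μ) = ENNReal.ofReal a' := (ENNReal.ofReal_toReal hfp).symm
  have hM : (∫⁻ x, (f x * g x) ^ (p/2) ∂μ) = ENNReal.ofReal m' := (ENNReal.ofReal_toReal hMt).symm
  refine hint.trans ?_
  rw [hA, hM, ← ENNReal.ofReal_mul hc1, ← ENNReal.ofReal_mul hc2,
    ← ENNReal.ofReal_add (mul_nonneg hc1 ha'pos.le) (mul_nonneg hc2 hm'pos.le), harith,
    htc, ENNReal.ofReal_mul (by positivity)]

/-- Theorem 2 for `p < 0`:
`‖f+g‖_p^p ≤ (C^{-1/p} + C^{1/p})^p ‖fg‖_{p/2}^{p/2}`; the functions take values in `(0,∞]`,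
with the convention `f^p = 0` where `f = ∞` (built into `ENNReal.rpow`). -/
theorem statement6
    {X : Type*} [MeasurableSpace X] (μ : Measure X) (p : ℝ)
    (hp : p < 0)
    (f g : X → ℝ≥0∞) (hf : Measurable f) (hg : Measurable g)
    (hfpos : ∀ x, 0 < f x) (hgpos : ∀ x, 0 < g x)
    (hfp : ∫⁻ x, f x ^ p ∂μ ≠ ∞) (hgp : ∫⁻ x, g x ^ p ∂μ ≠ ∞)
    (C : ℝ)
    (hC : C = if 0 < ∫⁻ x, (f x * g x) ^ (p / 2) ∂μ then
        min (min (∫⁻ x, f x ^ p ∂μ).toReal (∫⁻ x, g x ^ p ∂μ).toReal)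
            (∫⁻ x, (f x * g x) ^ (p / 2) ∂μ).toReal /
          (∫⁻ x, (f x * g x) ^ (p / 2) ∂μ).toReal
      else 1) :
    ∫⁻ x, (f x + g x) ^ p ∂μ ≤
      ENNReal.ofReal ((C ^ (-(1 / p)) + C ^ (1 / p)) ^ p) *
        ∫⁻ x, (f x * g x) ^ (p / 2) ∂μ := by
  by_cases hM : ∫⁻ x, (f x * g x) ^ (p / 2) ∂μ = 0
  · -- LHS is zero
    have hzero : ∫⁻ x, (f x + g x) ^ p ∂μ = 0 := by
      rw [lintegral_eq_zero_iff (show Measurable fun x => (f x + g x) ^ p from (hf.add hg).pow_const p)]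
      have h0 := (lintegral_eq_zero_iff (show Measurable fun x => (f x * g x) ^ (p/2) from (hf.mul hg).pow_const (p/2))).1 hM
      filter_upwards [h0] with x hx
      rcases ENNReal.rpow_eq_zero_iff.1 hx with ⟨h0', _⟩ | ⟨ht, _⟩
      · exact absurd h0' (ENNReal.mul_pos (hfpos x).ne' (hgpos x).ne').ne'
      · have htop : f x + g x = ⊤ := by
          rcases ENNReal.mul_eq_top.1 ht with ⟨_, h⟩ | ⟨h, _⟩ <;> simp [h]
        simp only [Pi.zero_apply]
        rw [htop, ENNReal.top_rpow_of_neg hp]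
    rw [hzero]
    exact zero_le
  · have hMpos : 0 < ∫⁻ x, (f x * g x) ^ (p / 2) ∂μ := pos_iff_ne_zero.2 hM
    rw [if_pos hMpos] at hC
    rcases le_total (∫⁻ x, f x ^ p ∂μ) (∫⁻ x, g x ^ p ∂μ) with hAB | hAB
    · refine key μ hp f g hf hg hfpos hgpos hfp hgp hM C ?_
      rw [hC]
      congr 2
      exact min_eq_left ((ENNReal.toReal_le_toReal hfp hgp).2 hAB)
    · have hswapM : ∫⁻ x, (g x * f x) ^ (p/2) ∂μ = ∫⁻ x, (f x * g x) ^ (p/2) ∂μ :=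
        lintegral_congr fun x => by rw [mul_comm]
      have h := key μ hp g f hg hf hgpos hfpos hgp hfp (by rw [hswapM]; exact hM) C ?_
      · have hswapA : ∫⁻ x, (g x + f x) ^ p ∂μ = ∫⁻ x, (f x + g x) ^ p ∂μ :=
          lintegral_congr fun x => by rw [add_comm]
        rw [hswapA, hswapM] at h
        exact h
      · rw [hC, hswapM]
        congr 2
        exact min_eq_right ((ENNReal.toReal_le_toReal hgp hfp).2 hAB)
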